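/- Let p < q be positive integers with q odd and with 2 the least positive integer m such that p | q + m. Let (a_n) be the greedy Egyptian fraction expansion of p/q. Then for every m ∈ ℕ and every weakly increasing tuple of positive integers x_1 ≤ ⋯ ≤ x_m satisfying Σ_{n=1}^m 1/a_n ≤ Σ_{n=1}^m 1/x_n < p/q, one has x_n = a_n for all 1 ≤ n ≤ m; i.e., Σ_{n=1}^m 1/a_n is the unique best m-term underapproximation of p/q. -/

import Mathlib

open Finset

private lemma prod_lemma17 (n : ℕ) (s t : ℕ → ℝ)
    (hs : ∀ i ∈ Finset.Icc 1 n, 0 < s i)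
    (ht : ∀ i ∈ Finset.Icc 1 n, 0 < t i)
    (hsmono : ∀ i j, 1 ≤ i → i ≤ j → j ≤ n → s j ≤ s i)
    (hpre : ∀ j, 1 ≤ j → j < n → ∑ i ∈ Finset.Icc 1 j, s i ≤ ∑ i ∈ Finset.Icc 1 j, t i)
    (htot : ∑ i ∈ Finset.Icc 1 n, t i ≤ ∑ i ∈ Finset.Icc 1 n, s i) :
    (∏ i ∈ Finset.Icc 1 n, t i ≤ ∏ i ∈ Finset.Icc 1 n, s i) ∧
      ((∏ i ∈ Finset.Icc 1 n, s i ≤ ∏ i ∈ Finset.Icc 1 n, t i) →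
        ∀ i ∈ Finset.Icc 1 n, s i = t i) := by
  rcases Nat.eq_zero_or_pos n with rfl | hn
  · simp
  -- Abel-type claim
  have claim : ∀ j, 1 ≤ j → j ≤ n →
      ∑ i ∈ Finset.Icc 1 j, (t i - s i) / s i
        ≤ (∑ i ∈ Finset.Icc 1 j, t i - ∑ i ∈ Finset.Icc 1 j, s i) / s j := by
    intro j
    induction j with
    | zero => omega
    | succ j ihj =>
      intro _ hj1
      rcases Nat.eq_zero_or_pos j with rfl | hjpos
      · simp
      · have hjn : j < n := by omega
        have hstep : ∀ f : ℕ → ℝ, ∑ i ∈ Finset.Icc 1 (j+1), f i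
            = (∑ i ∈ Finset.Icc 1 j, f i) + f (j+1) := fun f =>
          Finset.sum_Icc_succ_top (by omega) f
        have hsj : 0 < s j := hs j (by simp only [Finset.mem_Icc]; omega)
        have hsj1 : 0 < s (j+1) := hs (j+1) (by simp only [Finset.mem_Icc]; omega)
        have hmono : s (j+1) ≤ s j := hsmono j (j+1) hjpos (by omega) (by omega)
        have hTS : 0 ≤ ∑ i ∈ Finset.Icc 1 j, t i - ∑ i ∈ Finset.Icc 1 j, s i := by
          have := hpre j hjpos hjn
          linarith
        have h1 : (∑ i ∈ Finset.Icc 1 j, t i - ∑ i ∈ Finset.Icc 1 j, s i) / s j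
            ≤ (∑ i ∈ Finset.Icc 1 j, t i - ∑ i ∈ Finset.Icc 1 j, s i) / s (j+1) :=
          div_le_div_of_nonneg_left hTS hsj1 hmono
        have h2 := ihj hjpos (by omega)
        rw [hstep (fun i => (t i - s i) / s i), hstep t, hstep s]
        have h3 : (∑ i ∈ Finset.Icc 1 j, t i + t (j+1)
              - (∑ i ∈ Finset.Icc 1 j, s i + s (j+1))) / s (j+1)
            = (∑ i ∈ Finset.Icc 1 j, t i - ∑ i ∈ Finset.Icc 1 j, s i) / s (j+1)
              + (t (j+1) - s (j+1)) / s (j+1) := by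
          field_simp
          ring
        rw [h3]
        linarith
  have hsn : 0 < s n := hs n (by simp only [Finset.mem_Icc]; omega)
  have habel : ∑ i ∈ Finset.Icc 1 n, (t i - s i) / s i ≤ 0 := by
    have h := claim n hn (le_refl n)
    have h2 : (∑ i ∈ Finset.Icc 1 n, t i - ∑ i ∈ Finset.Icc 1 n, s i) / s n ≤ 0 :=
      div_nonpos_iff.mpr (Or.inr ⟨by linarith, le_of_lt hsn⟩)
    linarith
  -- tangent line trick, pointwise
  have htangent : ∀ i ∈ Finset.Icc 1 n,
      Real.log (t i) ≤ Real.log (s i) + (t i - s i) / s i := by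
    intro i hi
    have hsi := hs i hi
    have hti := ht i hi
    have h := Real.log_le_sub_one_of_pos (x := t i / s i) (by positivity)
    rw [Real.log_div (ne_of_gt hti) (ne_of_gt hsi)] at h
    have : t i / s i - 1 = (t i - s i) / s i := by field_simp
    linarith [this ▸ h]
  have hlogsum : ∑ i ∈ Finset.Icc 1 n, Real.log (t i) ≤ ∑ i ∈ Finset.Icc 1 n, Real.log (s i) := by
    calc ∑ i ∈ Finset.Icc 1 n, Real.log (t i)
        ≤ ∑ i ∈ Finset.Icc 1 n, (Real.log (s i) + (t i - s i) / s i) :=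
          Finset.sum_le_sum htangent
      _ = (∑ i ∈ Finset.Icc 1 n, Real.log (s i)) + ∑ i ∈ Finset.Icc 1 n, (t i - s i) / s i :=
          Finset.sum_add_distrib
      _ ≤ ∑ i ∈ Finset.Icc 1 n, Real.log (s i) := by linarith
  have hProds : 0 < ∏ i ∈ Finset.Icc 1 n, s i := Finset.prod_pos hs
  have hProdt : 0 < ∏ i ∈ Finset.Icc 1 n, t i := Finset.prod_pos ht
  have hlogProd_s : Real.log (∏ i ∈ Finset.Icc 1 n, s i)
      = ∑ i ∈ Finset.Icc 1 n, Real.log (s i) :=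
    Real.log_prod (fun i hi => ne_of_gt (hs i hi))
  have hlogProd_t : Real.log (∏ i ∈ Finset.Icc 1 n, t i)
      = ∑ i ∈ Finset.Icc 1 n, Real.log (t i) :=
    Real.log_prod (fun i hi => ne_of_gt (ht i hi))
  constructor
  · rw [← Real.log_le_log_iff hProdt hProds, hlogProd_s, hlogProd_t]
    exact hlogsum
  · intro hle
    by_contra hcon
    push_neg at hcon
    obtain ⟨i0, hi0mem, hi0ne⟩ := hcon
    -- strict tangent at i0
    have hsi0 := hs i0 hi0mem
    have hti0 := ht i0 hi0mem
    have hstrict : Real.log (t i0) < Real.log (s i0) + (t i0 - s i0) / s i0 := by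
      have hne : t i0 / s i0 ≠ 1 := by
        intro h
        apply hi0ne
        field_simp at h
        linarith
      have h := Real.log_lt_sub_one_of_pos (x := t i0 / s i0) (by positivity) hne
      rw [Real.log_div (ne_of_gt hti0) (ne_of_gt hsi0)] at h
      have heq : t i0 / s i0 - 1 = (t i0 - s i0) / s i0 := by field_simp
      linarith [heq ▸ h]
    have hlt : ∑ i ∈ Finset.Icc 1 n, Real.log (t i)
        < ∑ i ∈ Finset.Icc 1 n, (Real.log (s i) + (t i - s i) / s i) :=
      Finset.sum_lt_sum (fun i hi => htangent i hi) ⟨i0, hi0mem, hstrict⟩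
    have hlt2 : ∑ i ∈ Finset.Icc 1 n, Real.log (t i) < ∑ i ∈ Finset.Icc 1 n, Real.log (s i) := by
      have := Finset.sum_add_distrib (s := Finset.Icc 1 n)
        (f := fun i => Real.log (s i)) (g := fun i => (t i - s i) / s i)
      linarith [hlt, habel, this]
    have : (∏ i ∈ Finset.Icc 1 n, t i) < ∏ i ∈ Finset.Icc 1 n, s i := by
      rw [← Real.log_lt_log_iff hProdt hProds, hlogProd_s, hlogProd_t]
      exact hlt2
    linarith

private lemma err_lower17 (p q : ℕ) (hq : 0 < q) (k : ℕ) (x : ℕ → ℤ)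
    (hx : ∀ i ∈ Finset.Icc 1 k, 0 < x i)
    (hlt : ∑ i ∈ Finset.Icc 1 k, (1:ℝ)/(x i) < (p:ℝ)/q) :
    1 / ((q:ℝ) * ∏ i ∈ Finset.Icc 1 k, (x i : ℝ))
      ≤ (p:ℝ)/q - ∑ i ∈ Finset.Icc 1 k, (1:ℝ)/(x i) := by
  set S : ℝ := ∑ i ∈ Finset.Icc 1 k, (1:ℝ)/(x i) with hS
  set Q : ℤ := ∏ i ∈ Finset.Icc 1 k, x i with hQ
  have hQpos : 0 < Q := Finset.prod_pos hx
  have hQR : (Q:ℝ) = ∏ i ∈ Finset.Icc 1 k, (x i : ℝ) := by rw [hQ]; push_cast; rfl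
  have hQRpos : (0:ℝ) < (Q:ℝ) := by exact_mod_cast hQpos
  have hqR : (0:ℝ) < (q:ℝ) := by exact_mod_cast hq
  set T : ℤ := ∑ i ∈ Finset.Icc 1 k, ∏ j ∈ (Finset.Icc 1 k).erase i, x j with hT
  have hST : S * (Q:ℝ) = (T:ℝ) := by
    rw [hS, hT, Finset.sum_mul]
    push_cast
    apply Finset.sum_congr rfl
    intro i hi
    have hxi : (x i : ℝ) ≠ 0 := by
      have := hx i hi
      positivity
    have hsplit : (x i : ℝ) * ∏ j ∈ (Finset.Icc 1 k).erase i, (x j : ℝ)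
        = ∏ j ∈ Finset.Icc 1 k, (x j : ℝ) :=
      Finset.mul_prod_erase _ (fun j => ((x j : ℝ))) hi
    rw [hQR, ← hsplit]
    field_simp
  set N : ℤ := (p:ℤ) * Q - (q:ℤ) * T with hN
  have herr : (p:ℝ)/q - S = (N:ℝ) / ((q:ℝ) * (Q:ℝ)) := by
    rw [hN]
    push_cast
    rw [eq_div_iff (by positivity)]
    have : S * ((q:ℝ) * (Q:ℝ)) = (q:ℝ) * (S * (Q:ℝ)) := by ring
    field_simp
    rw [← hST]
    ring
  have hNpos : 0 < N := by
    by_contra hc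
    push_neg at hc
    have : (N:ℝ) ≤ 0 := by exact_mod_cast hc
    have h2 : (N:ℝ) / ((q:ℝ) * (Q:ℝ)) ≤ 0 :=
      div_nonpos_iff.mpr (Or.inr ⟨this, by positivity⟩)
    rw [← herr] at h2
    linarith
  have hN1 : (1:ℝ) ≤ (N:ℝ) := by exact_mod_cast hNpos
  rw [herr, ← hQR]
  gcongr

set_option maxHeartbeats 1000000 in
theorem stmt_17 (p q : ℕ) (hp : 0 < p) (hpq : p < q) (hqodd : Odd q)
    (h1 : ¬ p ∣ q + 1) (h2 : p ∣ q + 2)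
    (a : ℕ → ℤ)
    (ha1 : a 1 = ⌊1/((p:ℝ)/q)⌋ + 1)
    (harec : ∀ j, 2 ≤ j →
      a j = ⌊1/((p:ℝ)/q - ∑ n ∈ Finset.Ico 1 j, (1:ℝ)/(a n))⌋ + 1) :
    ∀ m : ℕ, 1 ≤ m → ∀ x : ℕ → ℤ,
      (∀ n ∈ Finset.Icc 1 m, 0 < x n) →
      (∀ i j, 1 ≤ i → i ≤ j → j ≤ m → x i ≤ x j) →
      (∑ n ∈ Finset.Icc 1 m, (1:ℝ)/(a n) ≤ ∑ n ∈ Finset.Icc 1 m, (1:ℝ)/(x n)) →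
      (∑ n ∈ Finset.Icc 1 m, (1:ℝ)/(x n) < (p:ℝ)/q) →
      ∀ n ∈ Finset.Icc 1 m, x n = a n := by
  have hq0 : 0 < q := lt_trans hp hpq
  have hqR : (0:ℝ) < (q:ℝ) := by exact_mod_cast hq0
  have hpR : (0:ℝ) < (p:ℝ) := by exact_mod_cast hp
  -- p ≥ 3
  have hp3 : 3 ≤ p := by
    by_contra hc
    push_neg at hc
    interval_cases p
    · exact h1 (one_dvd _)
    · obtain ⟨c, hcc⟩ := h2
      obtain ⟨d, hd⟩ := hqodd
      omega
  -- a 1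
  obtain ⟨k, hk⟩ := h2
  have hk2 : 2 ≤ k := by nlinarith
  have hfloor1 : (1:ℝ)/((p:ℝ)/q) = (q:ℝ)/p := one_div_div _ _
  have hkR : (q:ℝ) + 2 = (p:ℝ) * k := by exact_mod_cast hk
  have hp3R : (3:ℝ) ≤ (p:ℝ) := by exact_mod_cast hp3
  have hfloor : ⌊(q:ℝ)/(p:ℝ)⌋ = (k:ℤ) - 1 := by
    rw [Int.floor_eq_iff]
    constructor
    · rw [le_div_iff₀ hpR]
      push_cast
      linarith
    · rw [div_lt_iff₀ hpR]
      push_cast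
      linarith
  have ha1k : a 1 = (k:ℤ) := by
    rw [ha1, hfloor1, hfloor]; ring
  have hpa1 : (p:ℤ) * a 1 = (q:ℤ) + 2 := by
    rw [ha1k]; exact_mod_cast hk.symm
  have ha1ge2 : (2:ℤ) ≤ a 1 := by rw [ha1k]; exact_mod_cast hk2
  have ha1pos : (0:ℤ) < a 1 := by linarith
  have ha1Rpos : (0:ℝ) < ((a 1 : ℤ) : ℝ) := by exact_mod_cast ha1pos
  have hpa1R : (p:ℝ) * ((a 1 : ℤ) : ℝ) = (q:ℝ) + 2 := by exact_mod_cast hpa1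
  -- q * a 1 is odd
  have hqa1odd : Odd ((q:ℤ) * a 1) := by
    have hkodd : Odd k := by
      have hq2odd : Odd (q + 2) := by
        obtain ⟨d, hd⟩ := hqodd; exact ⟨d + 1, by omega⟩
      rw [hk] at hq2odd
      exact (Nat.odd_mul.mp hq2odd).2
    obtain ⟨d, hd⟩ := hqodd
    obtain ⟨e, he⟩ := hkodd
    rw [ha1k]
    exact ⟨(2*d*e + d + e : ℕ), by push_cast; push_cast [hd, he]; ring⟩
  -- the error after one step
  have hE1 : (p:ℝ)/q - (1:ℝ)/((a 1 : ℤ):ℝ) = 2 / ((q:ℝ) * ((a 1:ℤ):ℝ)) := by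
    field_simp
    linarith [hpa1R]
  -- a 2
  have hqa1R : (0:ℝ) < (q:ℝ) * ((a 1:ℤ):ℝ) := by positivity
  have ha2 : 2 * a 2 = (q:ℤ) * a 1 + 1 := by
    have hrec := harec 2 (le_refl 2)
    have hIco : Finset.Ico 1 2 = {1} := rfl
    rw [hIco, Finset.sum_singleton, hE1] at hrec
    obtain ⟨e, he⟩ := hqa1odd
    have heR : ((q:ℝ) * ((a 1:ℤ):ℝ)) = 2 * (e:ℝ) + 1 := by exact_mod_cast he
    have hepos : (0:ℤ) ≤ e := by nlinarith [ha1pos, hq0]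
    have hfl : ⌊(1:ℝ) / (2 / ((q:ℝ) * ((a 1:ℤ):ℝ)))⌋ = e := by
      rw [one_div_div, heR, Int.floor_eq_iff]
      constructor
      · rw [le_div_iff₀ (by norm_num : (0:ℝ) < 2)]
        push_cast; linarith
      · rw [div_lt_iff₀ (by norm_num : (0:ℝ) < 2)]
        push_cast; linarith
    rw [hfl] at hrec
    rw [hrec]
    linarith [he]
  -- basic facts about a 2
  have hq4 : (4:ℤ) ≤ (q:ℤ) := by
    have : 4 ≤ q := by omega
    exact_mod_cast this
  have ha2gt : a 1 < a 2 := by nlinarith [ha2, ha1ge2, hq4]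
  have ha2pos : (0:ℤ) < a 2 := by linarith
  have ha2R : (2:ℝ) * ((a 2:ℤ):ℝ) = (q:ℝ) * ((a 1:ℤ):ℝ) + 1 := by exact_mod_cast ha2
  have ha2Rpos : (0:ℝ) < ((a 2:ℤ):ℝ) := by exact_mod_cast ha2pos
  -- products
  set P : ℕ → ℤ := fun n => ∏ i ∈ Finset.Icc 1 n, a i with hPdef
  have hP1 : P 1 = a 1 := by rw [hPdef]; simp
  have hPsucc : ∀ n, 1 ≤ n → P (n+1) = P n * a (n+1) := by
    intro n hn
    rw [hPdef]
    exact Finset.prod_Icc_succ_top (by omega) a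
  have hprod_ge1 : ∀ (s : Finset ℕ) (f : ℕ → ℤ), (∀ i ∈ s, 1 ≤ f i) → 1 ≤ ∏ i ∈ s, f i := by
    intro s f hf
    induction s using Finset.induction with
    | empty => simp
    | @insert x s hx ih =>
      rw [Finset.prod_insert hx]
      have h1 := hf x (Finset.mem_insert_self x s)
      have h2 := ih (fun i hi => hf i (Finset.mem_insert_of_mem hi))
      nlinarith
  -- the sum over Icc 1 2
  have hsum2 : ∑ i ∈ Finset.Icc 1 2, (1:ℝ)/((a i:ℤ):ℝ)
      = (1:ℝ)/((a 1:ℤ):ℝ) + (1:ℝ)/((a 2:ℤ):ℝ) := by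
    rw [show (2:ℕ) = 1 + 1 from rfl, Finset.sum_Icc_succ_top (by omega)]
    simp
  have hP2 : P 2 = a 1 * a 2 := by
    rw [show (2:ℕ) = 1 + 1 from rfl, hPsucc 1 (le_refl 1), hP1]
  have hE2 : (p:ℝ)/q - ∑ i ∈ Finset.Icc 1 2, (1:ℝ)/((a i:ℤ):ℝ)
      = 1/((q:ℝ) * ((P 2:ℤ):ℝ)) := by
    rw [hsum2, hP2]
    have hcast : ((a 1 * a 2 : ℤ):ℝ) = ((a 1:ℤ):ℝ) * ((a 2:ℤ):ℝ) := by push_cast; ring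
    rw [hcast]
    have hgoal : 2 / ((q:ℝ) * ((a 1:ℤ):ℝ)) - 1/((a 2:ℤ):ℝ)
        = 1/((q:ℝ) * (((a 1:ℤ):ℝ) * ((a 2:ℤ):ℝ))) := by
      field_simp
      linear_combination ha2R
    linarith [hE1, hgoal]
  -- KEY facts by induction
  have KEY : ∀ n, 2 ≤ n →
      ((∀ i, 1 ≤ i → i ≤ n → 0 < a i) ∧
       (∀ i j, 1 ≤ i → i ≤ j → j ≤ n → a i ≤ a j) ∧
       ((p:ℝ)/q - ∑ i ∈ Finset.Icc 1 n, (1:ℝ)/((a i:ℤ):ℝ)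
          = 1/((q:ℝ) * ((P n:ℤ):ℝ)))) := by
    intro n hn
    induction n, hn using Nat.le_induction with
    | base =>
      refine ⟨?_, ?_, hE2⟩
      · intro i h1i hi2
        rcases (by omega : i = 1 ∨ i = 2) with rfl | rfl
        · exact ha1pos
        · exact ha2pos
      · intro i j h1i hij hj2
        rcases (by omega : (i = 1 ∧ j = 1) ∨ (i = 1 ∧ j = 2) ∨ (i = 2 ∧ j = 2)) with
          ⟨rfl, rfl⟩ | ⟨rfl, rfl⟩ | ⟨rfl, rfl⟩
        · exact le_refl _
        · exact le_of_lt ha2gt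
        · exact le_refl _
    | succ n hn2 ih =>
      obtain ⟨ihpos, ihmono, iherr⟩ := ih
      have hPpos : 0 < P n := by
        rw [hPdef]
        apply Finset.prod_pos
        intro i hi
        simp only [Finset.mem_Icc] at hi
        exact ihpos i hi.1 hi.2
      have hPge1 : 1 ≤ P n := hPpos
      have hPR : (0:ℝ) < ((P n:ℤ):ℝ) := by exact_mod_cast hPpos
      have hanP : a n ≤ P n := by
        have hmem : n ∈ Finset.Icc 1 n := by simp only [Finset.mem_Icc]; omega
        have hfac : P n = a n * ∏ i ∈ (Finset.Icc 1 n).erase n, a i := by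
          rw [hPdef]
          exact (Finset.mul_prod_erase _ a hmem).symm
        have hrest : 1 ≤ ∏ i ∈ (Finset.Icc 1 n).erase n, a i := by
          apply hprod_ge1
          intro i hi
          have hmem2 := Finset.mem_of_mem_erase hi
          simp only [Finset.mem_Icc] at hmem2
          linarith [ihpos i hmem2.1 hmem2.2]
        calc a n = a n * 1 := by ring
          _ ≤ a n * ∏ i ∈ (Finset.Icc 1 n).erase n, a i := by
              apply mul_le_mul_of_nonneg_left hrest
              linarith [ihpos n (by omega) (le_refl n)]
          _ = P n := hfac.symm
      -- the recursion gives a (n+1)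
      have han1 : a (n+1) = (q:ℤ) * P n + 1 := by
        have hrec := harec (n+1) (by omega)
        rw [Finset.Ico_add_one_right_eq_Icc] at hrec
        rw [iherr, one_div_one_div] at hrec
        have hcast : (q:ℝ) * ((P n:ℤ):ℝ) = (((q:ℤ) * P n : ℤ):ℝ) := by push_cast; ring
        rw [hcast, Int.floor_intCast] at hrec
        exact hrec
      have hqZ : (1:ℤ) ≤ (q:ℤ) := by exact_mod_cast hq0
      have hangt : a n < a (n+1) := by
        rw [han1]
        have hq1 : P n ≤ (q:ℤ) * P n := le_mul_of_one_le_left (le_of_lt hPpos) hqZ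
        linarith
      have hposn1 : ∀ i, 1 ≤ i → i ≤ n+1 → 0 < a i := by
        intro i h1i hi
        rcases Nat.lt_or_ge i (n+1) with h | h
        · exact ihpos i h1i (by omega)
        · have : i = n+1 := by omega
          subst this
          have := ihpos n (by omega) (le_refl n)
          linarith
      have hmonon1 : ∀ i j, 1 ≤ i → i ≤ j → j ≤ n+1 → a i ≤ a j := by
        intro i j h1i hij hj
        rcases Nat.lt_or_ge j (n+1) with h | h
        · exact ihmono i j h1i hij (by omega)
        · have hj1 : j = n+1 := by omega
          subst hj1
          rcases Nat.lt_or_ge i (n+1) with h' | h'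
          · calc a i ≤ a n := ihmono i n h1i (by omega) (le_refl n)
              _ ≤ a (n+1) := le_of_lt hangt
          · have : i = n+1 := by omega
            subst this
            exact le_refl _
      refine ⟨hposn1, hmonon1, ?_⟩
      -- error formula at n+1
      have hsumstep : ∑ i ∈ Finset.Icc 1 (n+1), (1:ℝ)/((a i:ℤ):ℝ)
          = (∑ i ∈ Finset.Icc 1 n, (1:ℝ)/((a i:ℤ):ℝ)) + 1/((a (n+1):ℤ):ℝ) :=
        Finset.sum_Icc_succ_top (by omega) _
      have han1R : ((a (n+1):ℤ):ℝ) = (q:ℝ) * ((P n:ℤ):ℝ) + 1 := by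
        rw [han1]; push_cast; ring
      have hPn1R : ((P (n+1):ℤ):ℝ) = ((P n:ℤ):ℝ) * ((a (n+1):ℤ):ℝ) := by
        rw [hPsucc n (by omega)]; push_cast; ring
      rw [hsumstep, hPn1R, han1R]
      have hu : (0:ℝ) < (q:ℝ) * ((P n:ℤ):ℝ) := by positivity
      rw [show (p:ℝ)/q - ((∑ i ∈ Finset.Icc 1 n, (1:ℝ)/((a i:ℤ):ℝ))
            + 1/((q:ℝ) * ((P n:ℤ):ℝ) + 1))
          = ((p:ℝ)/q - ∑ i ∈ Finset.Icc 1 n, (1:ℝ)/((a i:ℤ):ℝ))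
            - 1/((q:ℝ) * ((P n:ℤ):ℝ) + 1) from by ring, iherr]
      rw [div_sub_div _ _ (by positivity) (by positivity), eq_div_iff (by positivity)]
      field_simp
      ring
  -- MAIN claim by strong induction
  have MAIN : ∀ m, 1 ≤ m → ∀ x : ℕ → ℤ,
      (∀ n ∈ Finset.Icc 1 m, 0 < x n) →
      (∀ i j, 1 ≤ i → i ≤ j → j ≤ m → x i ≤ x j) →
      (∑ n ∈ Finset.Icc 1 m, (1:ℝ)/((x n:ℤ):ℝ) < (p:ℝ)/q) →
      (∑ n ∈ Finset.Icc 1 m, (1:ℝ)/((x n:ℤ):ℝ)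
          ≤ ∑ n ∈ Finset.Icc 1 m, (1:ℝ)/((a n:ℤ):ℝ)) ∧
      ((∑ n ∈ Finset.Icc 1 m, (1:ℝ)/((a n:ℤ):ℝ)
          ≤ ∑ n ∈ Finset.Icc 1 m, (1:ℝ)/((x n:ℤ):ℝ)) →
        ∀ n ∈ Finset.Icc 1 m, x n = a n) := by
    intro m
    induction m using Nat.strong_induction_on with
    | _ m IH =>
      intro hm x hxpos hxmono hlt
      rcases eq_or_lt_of_le hm with hm1 | hm2
      · -- m = 1
        subst hm1
        have hx1 : 0 < x 1 := hxpos 1 (by simp)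
        have hx1R : (0:ℝ) < ((x 1:ℤ):ℝ) := by exact_mod_cast hx1
        have hs1 : ∑ n ∈ Finset.Icc 1 1, (1:ℝ)/((x n:ℤ):ℝ) = 1/((x 1:ℤ):ℝ) := by simp
        have ha1s : ∑ n ∈ Finset.Icc 1 1, (1:ℝ)/((a n:ℤ):ℝ) = 1/((a 1:ℤ):ℝ) := by simp
        rw [hs1] at hlt
        have hqx : (q:ℤ) < (p:ℤ) * x 1 := by
          rw [div_lt_div_iff₀ hx1R hqR] at hlt
          have : (q:ℝ) < (p:ℝ) * ((x 1:ℤ):ℝ) := by linarith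
          exact_mod_cast this
        have hne : (p:ℤ) * x 1 ≠ (q:ℤ) + 1 := by
          intro hcon
          apply h1
          have hdvd : (p:ℤ) ∣ ((q:ℤ) + 1) := ⟨x 1, hcon.symm⟩
          rw [show ((q:ℤ)+1) = (((q+1:ℕ)):ℤ) by push_cast; ring] at hdvd
          exact_mod_cast hdvd
        have hge2 : (q:ℤ) + 2 ≤ (p:ℤ) * x 1 := by
          have h' : (q:ℤ) + 1 ≤ (p:ℤ) * x 1 := hqx
          have h'' : (q:ℤ) + 1 < (p:ℤ) * x 1 := lt_of_le_of_ne h' (Ne.symm hne)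
          linarith
        have hpposZ : (0:ℤ) < (p:ℤ) := by exact_mod_cast hp
        have hax : a 1 ≤ x 1 := by
          have hmul : (p:ℤ) * a 1 ≤ (p:ℤ) * x 1 := by rw [hpa1]; exact hge2
          exact le_of_mul_le_mul_left hmul hpposZ
        have haxR : ((a 1:ℤ):ℝ) ≤ ((x 1:ℤ):ℝ) := by exact_mod_cast hax
        constructor
        · rw [hs1, ha1s]
          exact one_div_le_one_div_of_le ha1Rpos haxR
        · intro hge n hn
          have hn1 : n = 1 := by
            simp only [Finset.mem_Icc] at hn; omega
          subst hn1
          rw [hs1, ha1s] at hge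
          have hxa : x 1 ≤ a 1 := by
            have := (one_div_le_one_div ha1Rpos hx1R).mp hge
            exact_mod_cast this
          exact le_antisymm hxa hax
      · -- m ≥ 2
        have hm2' : 2 ≤ m := hm2
        obtain ⟨hapos, hamono, herr⟩ := KEY m hm2'
        have hxposR : ∀ i ∈ Finset.Icc 1 m, (0:ℝ) < (1:ℝ)/((x i:ℤ):ℝ) := by
          intro i hi
          have h := hxpos i hi
          have : (0:ℝ) < ((x i:ℤ):ℝ) := by exact_mod_cast h
          positivity
        have haposR : ∀ i ∈ Finset.Icc 1 m, (0:ℝ) < (1:ℝ)/((a i:ℤ):ℝ) := by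
          intro i hi
          simp only [Finset.mem_Icc] at hi
          have h := hapos i hi.1 hi.2
          have : (0:ℝ) < ((a i:ℤ):ℝ) := by exact_mod_cast h
          positivity
        have hsmono : ∀ i j, 1 ≤ i → i ≤ j → j ≤ m →
            (1:ℝ)/((x j:ℤ):ℝ) ≤ (1:ℝ)/((x i:ℤ):ℝ) := by
          intro i j h1i hij hjm
          have hxi : 0 < x i := hxpos i (by simp only [Finset.mem_Icc]; omega)
          have hxiR : (0:ℝ) < ((x i:ℤ):ℝ) := by exact_mod_cast hxi
          have hxij : ((x i:ℤ):ℝ) ≤ ((x j:ℤ):ℝ) := by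
            exact_mod_cast hxmono i j h1i hij hjm
          exact one_div_le_one_div_of_le hxiR hxij
        have hpre : ∀ j, 1 ≤ j → j < m →
            ∑ i ∈ Finset.Icc 1 j, (1:ℝ)/((x i:ℤ):ℝ)
              ≤ ∑ i ∈ Finset.Icc 1 j, (1:ℝ)/((a i:ℤ):ℝ) := by
          intro j hj1 hjm
          have hsub : Finset.Icc 1 j ⊆ Finset.Icc 1 m :=
            Finset.Icc_subset_Icc_right (by omega)
          have hltj : ∑ i ∈ Finset.Icc 1 j, (1:ℝ)/((x i:ℤ):ℝ) < (p:ℝ)/q := by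
            have hstrict : ∑ i ∈ Finset.Icc 1 j, (1:ℝ)/((x i:ℤ):ℝ)
                < ∑ i ∈ Finset.Icc 1 m, (1:ℝ)/((x i:ℤ):ℝ) := by
              apply Finset.sum_lt_sum_of_subset hsub (i := m)
              · simp only [Finset.mem_Icc]; omega
              · simp only [Finset.mem_Icc]; omega
              · exact hxposR m (by simp only [Finset.mem_Icc]; omega)
              · intro k hk _
                exact le_of_lt (hxposR k hk)
            linarith
          exact (IH j hjm hj1 x
            (fun i hi => hxpos i (hsub hi))
            (fun i1 j1 h1 h2 h3 => hxmono i1 j1 h1 h2 (by omega))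
            hltj).1
        -- product conversions
        have hPXpos : (0:ℝ) < ∏ i ∈ Finset.Icc 1 m, ((x i:ℤ):ℝ) := by
          apply Finset.prod_pos
          intro i hi
          have := hxpos i hi
          exact_mod_cast this
        have hPApos : (0:ℝ) < ∏ i ∈ Finset.Icc 1 m, ((a i:ℤ):ℝ) := by
          apply Finset.prod_pos
          intro i hi
          simp only [Finset.mem_Icc] at hi
          have := hapos i hi.1 hi.2
          exact_mod_cast this
        have hprodx : ∏ i ∈ Finset.Icc 1 m, ((1:ℝ)/((x i:ℤ):ℝ))
            = 1 / ∏ i ∈ Finset.Icc 1 m, ((x i:ℤ):ℝ) := by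
          rw [Finset.prod_div_distrib, Finset.prod_const_one]
        have hproda : ∏ i ∈ Finset.Icc 1 m, ((1:ℝ)/((a i:ℤ):ℝ))
            = 1 / ∏ i ∈ Finset.Icc 1 m, ((a i:ℤ):ℝ) := by
          rw [Finset.prod_div_distrib, Finset.prod_const_one]
        have hPmR : ((P m:ℤ):ℝ) = ∏ i ∈ Finset.Icc 1 m, ((a i:ℤ):ℝ) := by
          rw [hPdef]; push_cast; rfl
        have herr' : (p:ℝ)/q - ∑ i ∈ Finset.Icc 1 m, (1:ℝ)/((a i:ℤ):ℝ)
            = 1/((q:ℝ) * ∏ i ∈ Finset.Icc 1 m, ((a i:ℤ):ℝ)) := by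
          rw [← hPmR]; exact herr
        have hlb := err_lower17 p q hq0 m x hxpos hlt
        -- Part 1
        have hle1 : ∑ n ∈ Finset.Icc 1 m, (1:ℝ)/((x n:ℤ):ℝ)
            ≤ ∑ n ∈ Finset.Icc 1 m, (1:ℝ)/((a n:ℤ):ℝ) := by
          by_contra hc
          push_neg at hc
          obtain ⟨hPLE, _⟩ := prod_lemma17 m
            (fun i => (1:ℝ)/((x i:ℤ):ℝ)) (fun i => (1:ℝ)/((a i:ℤ):ℝ))
            hxposR haposR hsmono hpre (le_of_lt hc)
          rw [hprodx, hproda] at hPLE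
          have hXA : ∏ i ∈ Finset.Icc 1 m, ((x i:ℤ):ℝ)
              ≤ ∏ i ∈ Finset.Icc 1 m, ((a i:ℤ):ℝ) :=
            (one_div_le_one_div hPApos hPXpos).mp hPLE
          have hQP : 1/((q:ℝ) * ∏ i ∈ Finset.Icc 1 m, ((a i:ℤ):ℝ))
              ≤ 1/((q:ℝ) * ∏ i ∈ Finset.Icc 1 m, ((x i:ℤ):ℝ)) := by
            apply one_div_le_one_div_of_le (by positivity)
            exact mul_le_mul_of_nonneg_left hXA (le_of_lt hqR)
          linarith [hlb, herr']
        refine ⟨hle1, fun hge => ?_⟩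
        -- Part 2
        obtain ⟨hPLE, hEQfun⟩ := prod_lemma17 m
          (fun i => (1:ℝ)/((x i:ℤ):ℝ)) (fun i => (1:ℝ)/((a i:ℤ):ℝ))
          hxposR haposR hsmono hpre hge
        have heqS : ∑ n ∈ Finset.Icc 1 m, (1:ℝ)/((x n:ℤ):ℝ)
            = ∑ n ∈ Finset.Icc 1 m, (1:ℝ)/((a n:ℤ):ℝ) := le_antisymm hle1 hge
        have hAX : ∏ i ∈ Finset.Icc 1 m, ((a i:ℤ):ℝ)
            ≤ ∏ i ∈ Finset.Icc 1 m, ((x i:ℤ):ℝ) := by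
          have h2 : 1/((q:ℝ) * ∏ i ∈ Finset.Icc 1 m, ((x i:ℤ):ℝ))
              ≤ 1/((q:ℝ) * ∏ i ∈ Finset.Icc 1 m, ((a i:ℤ):ℝ)) := by
            rw [← herr', ← heqS]
            exact hlb
          have h3 : (q:ℝ) * ∏ i ∈ Finset.Icc 1 m, ((a i:ℤ):ℝ)
              ≤ (q:ℝ) * ∏ i ∈ Finset.Icc 1 m, ((x i:ℤ):ℝ) :=
            (one_div_le_one_div (by positivity) (by positivity)).mp h2
          exact le_of_mul_le_mul_left h3 hqR
        have heqprod := hEQfun (by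
          rw [hprodx, hproda]
          exact one_div_le_one_div_of_le hPApos hAX)
        intro n hn
        have hval := heqprod n hn
        have hxn : 0 < x n := hxpos n hn
        simp only [Finset.mem_Icc] at hn
        have han : 0 < a n := hapos n hn.1 hn.2
        have hxnR : (0:ℝ) < ((x n:ℤ):ℝ) := by exact_mod_cast hxn
        have hanR : (0:ℝ) < ((a n:ℤ):ℝ) := by exact_mod_cast han
        have hxne : ((x n:ℤ):ℝ) ≠ 0 := ne_of_gt hxnR
        have hane : ((a n:ℤ):ℝ) ≠ 0 := ne_of_gt hanR
        field_simp at hval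
        exact_mod_cast hval.symm
  intro m hm x hxpos hxmono hsum hlt
  exact (MAIN m hm x hxpos hxmono hlt).2 hsum
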